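/- Let p be a prime, G a finite group, and H a normal subgroup of G whose index [G:H] is a power of p. If a p-subgroup P ≤ G is p-centric in G and F_p(G)-radical, then P ∩ H is p-centric in H and F_p(H)-radical. -/

import Mathlib

/-- A subgroup `P ≤ G` is `p`-centric in `G` if every element of `p`-power order in the
centralizer `C_G(P)` lies in `P`. -/
def IsPCentric (p : ℕ) {G : Type*} [Group G] (P : Subgroup G) : Prop :=
  ∀ g ∈ Subgroup.centralizer (P : Set G), (∃ n : ℕ, g ^ p ^ n = 1) → g ∈ P

/-- The subgroup `P ⬝ C_G(P)` of the normalizer `N_G(P)`, i.e. the kernel of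
`N_G(P) → Out_G(P)`. -/
def outKer {G : Type*} [Group G] (P : Subgroup G) : Subgroup (Subgroup.normalizer (P : Set G)) :=
  (P ⊔ Subgroup.centralizer (P : Set G)).subgroupOf (Subgroup.normalizer (P : Set G))

instance outKer_normal {G : Type*} [Group G] (P : Subgroup G) : (outKer P).Normal := by
  constructor
  intro n hn g
  rw [outKer, Subgroup.mem_subgroupOf] at hn ⊢
  have key : ∀ x : G, x ∈ (Subgroup.normalizer (P : Set G)) →
      ∀ y ∈ P ⊔ Subgroup.centralizer (P : Set G),
        x * y * x⁻¹ ∈ P ⊔ Subgroup.centralizer (P : Set G) := by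
    intro x hx y hy
    have hPle : P.map (MulAut.conj x).toMonoidHom
        ≤ P ⊔ Subgroup.centralizer (P : Set G) := by
      rintro _ ⟨y, hyP, rfl⟩
      exact Subgroup.mem_sup_left
        (by simpa using (Subgroup.mem_normalizer_iff.mp hx y).mp hyP)
    have hCle : (Subgroup.centralizer (P : Set G)).map (MulAut.conj x).toMonoidHom
        ≤ P ⊔ Subgroup.centralizer (P : Set G) := by
      rintro _ ⟨y, hyC, rfl⟩
      have hyC' : ∀ h ∈ P, h * y = y * h := fun h hh =>
        Subgroup.mem_centralizer_iff.mp hyC h hh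
      refine Subgroup.mem_sup_right (Subgroup.mem_centralizer_iff.mpr ?_)
      intro h hh
      have hh' : x⁻¹ * h * x ∈ P := by
        refine (Subgroup.mem_normalizer_iff.mp hx (x⁻¹ * h * x)).mpr ?_
        have : x * (x⁻¹ * h * x) * x⁻¹ = h := by group
        rw [this]
        exact hh
      have hcomm := hyC' _ hh'
      have : (MulAut.conj x).toMonoidHom y = x * y * x⁻¹ := by
        simp [MulAut.conj_apply]
      rw [this]
      calc h * (x * y * x⁻¹) = x * ((x⁻¹ * h * x) * y) * x⁻¹ := by group
        _ = x * (y * (x⁻¹ * h * x)) * x⁻¹ := by rw [hcomm]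
        _ = x * y * x⁻¹ * h := by group
    have hmap : (P ⊔ Subgroup.centralizer (P : Set G)).map (MulAut.conj x).toMonoidHom
        ≤ P ⊔ Subgroup.centralizer (P : Set G) := by
      rw [Subgroup.map_sup]
      exact sup_le hPle hCle
    have := hmap (Subgroup.mem_map_of_mem _ hy)
    simpa using this
  have := key (g : G) g.2 (n : G) hn
  simpa [mul_assoc] using this

/-- `Out_G(P) = N_G(P) / (P ⬝ C_G(P))`. -/
def OutG {G : Type*} [Group G] (P : Subgroup G) : Type _ :=
  (Subgroup.normalizer (P : Set G)) ⧸ outKer P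

instance {G : Type*} [Group G] (P : Subgroup G) : Group (OutG P) :=
  inferInstanceAs (Group ((Subgroup.normalizer (P : Set G)) ⧸ outKer P))

/-- A subgroup `P ≤ G` is `F_p(G)`-radical if `Out_G(P) = N_G(P)/(P ⬝ C_G(P))` has no
nontrivial normal `p`-subgroup. -/
def IsFpRadical (p : ℕ) {G : Type*} [Group G] (P : Subgroup G) : Prop :=
  ∀ K : Subgroup (OutG P), K.Normal → IsPGroup p K → K = ⊥
namespace Stmt16Aux

open Subgroup

variable {G : Type*} [Group G]

/-- Product decomposition in a join `A ⊔ B` when `A` normalizes `B`. -/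
theorem mem_sup_decomp {A B : Subgroup G} (h : ∀ a ∈ A, ∀ b ∈ B, a * b * a⁻¹ ∈ B) :
    ∀ x ∈ A ⊔ B, ∃ a ∈ A, ∃ b ∈ B, x = a * b := by
  intro x hx
  let D : Subgroup G :=
    { carrier := {x | ∃ a ∈ A, ∃ b ∈ B, x = a * b}
      one_mem' := ⟨1, one_mem _, 1, one_mem _, by group⟩
      mul_mem' := by
        rintro x y ⟨a, ha, b, hb, rfl⟩ ⟨a', ha', b', hb', rfl⟩
        exact ⟨a * a', mul_mem ha ha', (a'⁻¹ * b * a'⁻¹⁻¹) * b',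
          mul_mem (h _ (inv_mem ha') _ hb) hb', by group⟩
      inv_mem' := by
        rintro x ⟨a, ha, b, hb, rfl⟩
        exact ⟨a⁻¹, inv_mem ha, a * b⁻¹ * a⁻¹, h _ ha _ (inv_mem hb), by group⟩ }
  have hle : A ⊔ B ≤ D := sup_le (fun a ha => ⟨a, ha, 1, one_mem _, by group⟩)
    (fun b hb => ⟨1, one_mem _, b, hb, by group⟩)
  exact hle hx

theorem conj_mem_of_normalizer {P : Subgroup G} {n : G} (hn : n ∈ (Subgroup.normalizer (P : Set G)))
    {y : G} (hy : y ∈ P) : n * y * n⁻¹ ∈ P :=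
  (Subgroup.mem_normalizer_iff.mp hn y).mp hy

/-- The normalizer of `P` normalizes the centralizer of `P`. -/
theorem conj_mem_centralizer {P : Subgroup G} {n : G} (hn : n ∈ (Subgroup.normalizer (P : Set G)))
    {c : G} (hc : c ∈ Subgroup.centralizer (P : Set G)) :
    n * c * n⁻¹ ∈ Subgroup.centralizer (P : Set G) := by
  rw [Subgroup.mem_centralizer_iff] at hc ⊢
  intro y hy
  have hy' : n⁻¹ * y * n ∈ P := by
    have := conj_mem_of_normalizer (inv_mem hn) hy
    simpa using this
  have hcomm := hc _ hy'
  calc y * (n * c * n⁻¹) = n * ((n⁻¹ * y * n) * c) * n⁻¹ := by group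
    _ = n * (c * (n⁻¹ * y * n)) * n⁻¹ := by rw [hcomm]
    _ = (n * c * n⁻¹) * y := by group

end Stmt16Aux
namespace Stmt16Aux2

open Subgroup

variable {p : ℕ} {G : Type*} [Group G]

/-- Uniform exponent for a finite `p`-group. -/
theorem exists_uniform_exponent (hp : p.Prime) [Finite G] {P : Subgroup G}
    (hP : IsPGroup p P) : ∃ k : ℕ, ∀ y ∈ P, y ^ p ^ k = 1 := by
  haveI : Fact p.Prime := ⟨hp⟩
  obtain ⟨k, hk⟩ := hP.exists_card_eq
  refine ⟨k, fun y hy => ?_⟩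
  have : (⟨y, hy⟩ : P) ^ p ^ k = 1 := by
    rw [← hk]; exact pow_card_eq_one'
  simpa [Subtype.ext_iff] using this

/-- Lemma A: a `p`-element of `P ⬝ C_G(P)` lies in `P` when `P` is `p`-centric. -/
theorem pelem_mem_of_mem_sup {P : Subgroup G} (hP : IsPGroup p P) (hc : IsPCentric p P)
    {x : G} (hx : x ∈ P ⊔ Subgroup.centralizer (P : Set G))
    (hxp : ∃ n : ℕ, x ^ p ^ n = 1) : x ∈ P := by
  obtain ⟨u, hu, c, hcC, rfl⟩ := Stmt16Aux.mem_sup_decomp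
    (fun a ha b hb => Stmt16Aux.conj_mem_centralizer (Subgroup.le_normalizer ha) hb) _ hx
  obtain ⟨n, hn⟩ := hxp
  have hcomm : Commute u c := Subgroup.mem_centralizer_iff.mp hcC u hu
  have hpow : u ^ p ^ n * c ^ p ^ n = 1 := by rw [← hcomm.mul_pow]; exact hn
  have hcP : c ^ p ^ n ∈ P := by
    have : c ^ p ^ n = (u ^ p ^ n)⁻¹ := by
      rw [eq_inv_iff_mul_eq_one]
      calc c ^ p ^ n * u ^ p ^ n = u ^ p ^ n * c ^ p ^ n := ((hcomm.pow_pow _ _).symm :)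
        _ = 1 := hpow
    rw [this]; exact inv_mem (pow_mem hu _)
  obtain ⟨m, hm⟩ := hP ⟨c ^ p ^ n, hcP⟩
  have hcpe : c ^ p ^ (n + m) = 1 := by
    have : (c ^ p ^ n) ^ p ^ m = 1 := by
      simpa [Subtype.ext_iff, SubmonoidClass.coe_pow] using hm
    rw [pow_add, pow_mul]; exact this
  have hcmem : c ∈ P := hc c hcC ⟨n + m, hcpe⟩
  exact mul_mem hu hcmem

/-- Lemma B: if `x` normalizes `P`, centralizes `Q = P ⊓ H`, and `[x, P] ≤ Q`, then some
`p`-power of `x` centralizes `P`. -/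
theorem lemB (hp : p.Prime) [Finite G] {P H : Subgroup G} (hH : H.Normal)
    (hP : IsPGroup p P) {x : G} (hx : x ∈ (Subgroup.normalizer (P : Set G)))
    (hxc : ∀ q ∈ P ⊓ H, x * q * x⁻¹ = q) (hxH : x ∈ H) :
    ∃ k : ℕ, x ^ p ^ k ∈ Subgroup.centralizer (P : Set G) := by
  obtain ⟨k, hk⟩ := exists_uniform_exponent hp hP
  refine ⟨k, Subgroup.mem_centralizer_iff.mpr fun y hy => ?_⟩
  have hyP : (y : G) ∈ P := hy
  have hdQ : x * y * x⁻¹ * y⁻¹ ∈ P ⊓ H := by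
    refine Subgroup.mem_inf.mpr ⟨?_, ?_⟩
    · exact mul_mem (Stmt16Aux.conj_mem_of_normalizer hx hyP) (inv_mem hyP)
    · have h1 : y * x⁻¹ * y⁻¹ ∈ H := hH.conj_mem x⁻¹ (inv_mem hxH) y
      have : x * y * x⁻¹ * y⁻¹ = x * (y * x⁻¹ * y⁻¹) := by group
      rw [this]; exact mul_mem hxH h1
  set d := x * y * x⁻¹ * y⁻¹ with hd
  have key : ∀ n : ℕ, x ^ n * y * (x ^ n)⁻¹ = d ^ n * y := by
    intro n
    induction n with
    | zero => simp
    | succ n ih =>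
      have hdn : d ^ n ∈ P ⊓ H := pow_mem hdQ n
      calc x ^ (n + 1) * y * (x ^ (n + 1))⁻¹
          = x * (x ^ n * y * (x ^ n)⁻¹) * x⁻¹ := by rw [pow_succ']; group
        _ = x * (d ^ n * y) * x⁻¹ := by rw [ih]
        _ = (x * d ^ n * x⁻¹) * (x * y * x⁻¹) := by group
        _ = d ^ n * (x * y * x⁻¹) := by rw [hxc _ hdn]
        _ = d ^ n * (d * y) := by rw [hd]; group
        _ = d ^ (n + 1) * y := by rw [pow_succ]; group
  have hone : d ^ p ^ k = 1 := hk d hdQ.1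
  have := key (p ^ k)
  rw [hone, one_mul] at this
  have h2 := congrArg (· * x ^ p ^ k) this
  simp only [mul_assoc, inv_mul_cancel, mul_one] at h2
  exact h2.symm

end Stmt16Aux2
namespace Stmt16Aux3

open Subgroup Stmt16Aux Stmt16Aux2

variable {p : ℕ} {G : Type*} [Group G]

theorem norm_le_inf_normalizer {P H : Subgroup G} (hH : H.Normal) :
    (Subgroup.normalizer (P : Set G)) ≤ (Subgroup.normalizer (((P ⊓ H : Subgroup G)) : Set G)) := by
  intro n hn
  rw [Subgroup.mem_normalizer_iff]
  intro q
  constructor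
  · intro hq
    exact Subgroup.mem_inf.mpr ⟨conj_mem_of_normalizer hn (Subgroup.mem_inf.mp hq).1,
      hH.conj_mem _ (Subgroup.mem_inf.mp hq).2 n⟩
  · intro hq
    have h1 := conj_mem_of_normalizer (inv_mem hn) (Subgroup.mem_inf.mp hq).1
    have h2 := hH.conj_mem _ (Subgroup.mem_inf.mp hq).2 n⁻¹
    have he : n⁻¹ * (n * q * n⁻¹) * n⁻¹⁻¹ = q := by group
    rw [he] at h1 h2
    exact Subgroup.mem_inf.mpr ⟨h1, h2⟩

theorem hQconj {P H : Subgroup G} (hH : H.Normal) :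
    ∀ n ∈ (Subgroup.normalizer (P : Set G)), ∀ q ∈ P ⊓ H, n * q * n⁻¹ ∈ P ⊓ H := fun n hn q hq =>
  conj_mem_of_normalizer (norm_le_inf_normalizer hH hn) hq

theorem hCconj {P H : Subgroup G} (hH : H.Normal) :
    ∀ n ∈ (Subgroup.normalizer (P : Set G)), ∀ c ∈ Subgroup.centralizer (((P ⊓ H) : Subgroup G) : Set G) ⊓ H,
      n * c * n⁻¹ ∈ Subgroup.centralizer (((P ⊓ H) : Subgroup G) : Set G) ⊓ H := by
  intro n hn c hc
  exact Subgroup.mem_inf.mpr ⟨conj_mem_centralizer (norm_le_inf_normalizer hH hn)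
    (Subgroup.mem_inf.mp hc).1, hH.conj_mem _ (Subgroup.mem_inf.mp hc).2 n⟩

theorem hQCdecomp {P H : Subgroup G} (hH : H.Normal) :
    ∀ v ∈ (P ⊓ H) ⊔ (Subgroup.centralizer (((P ⊓ H) : Subgroup G) : Set G) ⊓ H),
      ∃ q ∈ P ⊓ H, ∃ c ∈ Subgroup.centralizer (((P ⊓ H) : Subgroup G) : Set G) ⊓ H,
        v = q * c :=
  mem_sup_decomp (fun a ha b hb =>
    hCconj hH a (Subgroup.le_normalizer (Subgroup.mem_inf.mp ha).1) b hb)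

theorem hQCconj {P H : Subgroup G} (hH : H.Normal) :
    ∀ n ∈ (Subgroup.normalizer (P : Set G)),
      ∀ v ∈ (P ⊓ H) ⊔ (Subgroup.centralizer (((P ⊓ H) : Subgroup G) : Set G) ⊓ H),
        n * v * n⁻¹ ∈ (P ⊓ H) ⊔
          (Subgroup.centralizer (((P ⊓ H) : Subgroup G) : Set G) ⊓ H) := by
  intro n hn v hv
  obtain ⟨q, hq, c, hc, rfl⟩ := hQCdecomp hH v hv
  have he : n * (q * c) * n⁻¹ = (n * q * n⁻¹) * (n * c * n⁻¹) := by group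
  rw [he]
  exact mul_mem (Subgroup.mem_sup_left (hQconj hH n hn q hq))
    (Subgroup.mem_sup_right (hCconj hH n hn c hc))

/-- The key lemma: a `p`-element of a suitable subgroup `W` that normalizes `P` lies in `P`. -/
theorem key (hp : p.Prime) [Finite G] {P H : Subgroup G} (hH : H.Normal)
    (hP : IsPGroup p P) (hc : IsPCentric p P) (hr : IsFpRadical p P)
    (W : Subgroup G) (hWH : W ≤ H)
    (hWinv : ∀ n ∈ (Subgroup.normalizer (P : Set G)), ∀ w ∈ W, n * w * n⁻¹ ∈ W)
    (hWpow : ∀ w ∈ W, ∃ m : ℕ, w ^ p ^ m ∈ (P ⊓ H) ⊔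
      (Subgroup.centralizer (((P ⊓ H) : Subgroup G) : Set G) ⊓ H)) :
    ∀ x ∈ W, x ∈ (Subgroup.normalizer (P : Set G)) → (∃ n : ℕ, x ^ p ^ n = 1) → x ∈ P := by
  haveI : ((P ⊔ Subgroup.centralizer (P : Set G)).subgroupOf (Subgroup.normalizer (P : Set G))).Normal :=
    outKer_normal P
  set π := QuotientGroup.mk' (outKer P) with hπ
  set D := ((Subgroup.normalizer (P : Set G)) ⊓ W).subgroupOf (Subgroup.normalizer (P : Set G)) with hDdef
  have hDn : D.Normal := by
    constructor
    intro a ha g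
    rw [hDdef, Subgroup.mem_subgroupOf] at ha ⊢
    have hcoe : ((g * a * g⁻¹ : (Subgroup.normalizer (P : Set G))) : G) = (g : G) * (a : G) * (g : G)⁻¹ := by
      simp
    rw [hcoe]
    refine Subgroup.mem_inf.mpr ⟨?_, ?_⟩
    · exact mul_mem (mul_mem g.2 (Subgroup.mem_inf.mp ha).1) (inv_mem g.2)
    · exact hWinv (g : G) g.2 (a : G) (Subgroup.mem_inf.mp ha).2
  have hπpow : ∀ x : (Subgroup.normalizer (P : Set G)), (x : G) ∈ W → ∃ n : ℕ, (π x) ^ p ^ n = 1 := by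
    intro x hxW
    obtain ⟨m, hm⟩ := hWpow _ hxW
    obtain ⟨q, hq, c, hcC, heq⟩ := hQCdecomp hH _ hm
    have hcN : c ∈ (Subgroup.normalizer (P : Set G)) := by
      have hce : c = q⁻¹ * (x : G) ^ p ^ m := by rw [heq]; group
      rw [hce]
      exact mul_mem (inv_mem (Subgroup.le_normalizer (Subgroup.mem_inf.mp hq).1))
        (pow_mem x.2 _)
    have hxc : ∀ r ∈ P ⊓ H, c * r * c⁻¹ = r := by
      intro r hr
      have hcm := Subgroup.mem_centralizer_iff.mp (Subgroup.mem_inf.mp hcC).1 r hr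
      rw [← hcm]
      simp [mul_assoc]
    obtain ⟨k, hck⟩ := lemB hp hH hP hcN hxc (Subgroup.mem_inf.mp hcC).2
    refine ⟨m + k, ?_⟩
    have hxpow : x ^ p ^ m =
        (⟨q, Subgroup.le_normalizer (Subgroup.mem_inf.mp hq).1⟩ : (Subgroup.normalizer (P : Set G))) *
          ⟨c, hcN⟩ := by
      apply Subtype.ext
      simpa [SubmonoidClass.coe_pow] using heq
    have h1 : (π x) ^ p ^ m = π ⟨c, hcN⟩ := by
      rw [← map_pow, hxpow, map_mul]
      have hq1 : π (⟨q, Subgroup.le_normalizer (Subgroup.mem_inf.mp hq).1⟩ : (Subgroup.normalizer (P : Set G)))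
          = 1 := by
        rw [hπ]
        exact (QuotientGroup.eq_one_iff _).mpr
          (Subgroup.mem_subgroupOf.mpr (Subgroup.mem_sup_left (Subgroup.mem_inf.mp hq).1))
      rw [hq1, one_mul]
    rw [pow_add, pow_mul, h1, ← map_pow, hπ]
    refine (QuotientGroup.eq_one_iff _).mpr (Subgroup.mem_subgroupOf.mpr ?_)
    refine Subgroup.mem_sup_right ?_
    simpa [SubmonoidClass.coe_pow] using hck
  have hKDn : (Subgroup.map π D).Normal := hDn.map π (QuotientGroup.mk'_surjective _)
  have hKDp : IsPGroup p (Subgroup.map π D) := by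
    rintro ⟨g, hg⟩
    obtain ⟨x, hxD, rfl⟩ := hg
    obtain ⟨n, hn⟩ := hπpow x (Subgroup.mem_inf.mp (Subgroup.mem_subgroupOf.mp hxD)).2
    exact ⟨n, by apply Subtype.ext; simpa [SubmonoidClass.coe_pow] using hn⟩
  have hbot : Subgroup.map π D = ⊥ := hr (Subgroup.map π D) hKDn hKDp
  intro x hxW hxN hxp
  have hmem : π ⟨x, hxN⟩ ∈ Subgroup.map π D :=
    Subgroup.mem_map_of_mem _ (Subgroup.mem_subgroupOf.mpr (Subgroup.mem_inf.mpr ⟨hxN, hxW⟩))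
  rw [hbot, Subgroup.mem_bot] at hmem
  have hxs : x ∈ P ⊔ Subgroup.centralizer (P : Set G) :=
    Subgroup.mem_subgroupOf.mp ((QuotientGroup.eq_one_iff _).mp hmem)
  exact pelem_mem_of_mem_sup hP hc hxs hxp

end Stmt16Aux3
namespace Stmt16Aux4

open Subgroup Stmt16Aux

variable {p : ℕ} {G : Type*} [Group G]

/-- In a finite setting, if the `p`-group `P` normalizes the `p`-group `T` and `T ≰ P`,
then some element of `T` outside `P` normalizes `P`. -/
theorem lemE (hp : p.Prime) [Finite G] {P T : Subgroup G}
    (hPp : IsPGroup p P) (hTp : IsPGroup p T)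
    (hnorm : ∀ u ∈ P, ∀ t ∈ T, u * t * u⁻¹ ∈ T) (hTP : ¬T ≤ P) :
    ∃ t ∈ T, t ∉ P ∧ t ∈ (Subgroup.normalizer (P : Set G)) := by
  haveI : Fact p.Prime := ⟨hp⟩
  have hPn : P ≤ (Subgroup.normalizer (T : Set G)) := by
    intro u hu
    rw [Subgroup.mem_normalizer_iff]
    intro t
    constructor
    · exact fun ht => hnorm u hu t ht
    · intro ht
      have := hnorm u⁻¹ (inv_mem hu) _ ht
      have he : u⁻¹ * (u * t * u⁻¹) * u⁻¹⁻¹ = t := by group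
      rwa [he] at this
  have hR : IsPGroup p (P ⊔ T : Subgroup G) := IsPGroup.to_sup_of_normal_right' hPp hTp hPn
  haveI : Group.IsNilpotent (P ⊔ T : Subgroup G) := hR.isNilpotent
  have hNC := normalizerCondition_of_isNilpotent (G := (P ⊔ T : Subgroup G))
  have hPlt : P.subgroupOf (P ⊔ T) < ⊤ := by
    obtain ⟨t, htT, htP⟩ := SetLike.not_le_iff_exists.mp hTP
    refine lt_top_iff_ne_top.mpr fun hcon => htP ?_
    have hmem : (⟨t, Subgroup.mem_sup_right htT⟩ : (P ⊔ T : Subgroup G)) ∈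
        P.subgroupOf (P ⊔ T) := by rw [hcon]; trivial
    exact Subgroup.mem_subgroupOf.mp hmem
  obtain ⟨x, hxn, hxP'⟩ := SetLike.exists_of_lt (hNC _ hPlt)
  have hxP : (x : G) ∉ P := fun h => hxP' (Subgroup.mem_subgroupOf.mpr h)
  have hxnorm : (x : G) ∈ (Subgroup.normalizer (P : Set G)) := by
    rw [Subgroup.mem_normalizer_iff]
    intro y
    constructor
    · intro hy
      have hyR : y ∈ P ⊔ T := Subgroup.mem_sup_left hy
      have := (Subgroup.mem_normalizer_iff.mp hxn ⟨y, hyR⟩).mp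
        (Subgroup.mem_subgroupOf.mpr hy)
      have h2 := Subgroup.mem_subgroupOf.mp this
      simpa using h2
    · intro hy
      have hyR : y ∈ P ⊔ T := by
        have h1 : (x : G)⁻¹ * ((x : G) * y * (x : G)⁻¹) * (x : G) ∈ P ⊔ T := by
          exact mul_mem (mul_mem (inv_mem x.2) (Subgroup.mem_sup_left hy)) x.2
        have he : (x : G)⁻¹ * ((x : G) * y * (x : G)⁻¹) * (x : G) = y := by group
        rwa [he] at h1
      have hxyR : (x : G) * y * (x : G)⁻¹ ∈ P ⊔ T := Subgroup.mem_sup_left hy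
      have := (Subgroup.mem_normalizer_iff.mp hxn ⟨y, hyR⟩).mpr
        (Subgroup.mem_subgroupOf.mpr (by simpa using hy))
      exact Subgroup.mem_subgroupOf.mp this
  obtain ⟨u, hu, t, ht, heq⟩ := mem_sup_decomp hnorm (x : G) x.2
  refine ⟨t, ht, ?_, ?_⟩
  · intro htP
    exact hxP (heq ▸ mul_mem hu htP)
  · have hte : t = u⁻¹ * (x : G) := by rw [heq]; group
    rw [hte]
    exact mul_mem (inv_mem (Subgroup.le_normalizer hu)) hxnorm

end Stmt16Aux4
namespace Stmt16Aux5

open Subgroup Stmt16Aux Stmt16Aux3 Stmt16Aux4 Pointwise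

variable {p : ℕ} {G : Type*} [Group G]

/-- The engine: every `p`-element of `W` is of the form `u * (w * y * w⁻¹) * u⁻¹` with
`u ∈ P`, `w ∈ W` and `y ∈ P ⊓ H`. -/
theorem engine (hp : p.Prime) [Finite G] {P H : Subgroup G} (hH : H.Normal)
    (hP : IsPGroup p P) (hc : IsPCentric p P) (hr : IsFpRadical p P)
    (W : Subgroup G) (hWH : W ≤ H)
    (hWinv : ∀ n ∈ (Subgroup.normalizer (P : Set G)), ∀ w ∈ W, n * w * n⁻¹ ∈ W)
    (hWpow : ∀ w ∈ W, ∃ m : ℕ, w ^ p ^ m ∈ (P ⊓ H) ⊔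
      (Subgroup.centralizer (((P ⊓ H) : Subgroup G) : Set G) ⊓ H)) :
    ∀ g ∈ W, (∃ a : ℕ, g ^ p ^ a = 1) →
      ∃ u ∈ P, ∃ w ∈ W, ∃ y ∈ P ⊓ H, g = u * (w * y * w⁻¹) * u⁻¹ := by
  haveI : Fact p.Prime := ⟨hp⟩
  have hkey := key hp hH hP hc hr W hWH hWinv hWpow
  have hPnW : ∀ a ∈ P, ∀ b ∈ W, a * b * a⁻¹ ∈ W := fun a ha b hb =>
    hWinv a (Subgroup.le_normalizer ha) b hb
  set M := P ⊔ W with hM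
  have hPM : P ≤ M := le_sup_left
  have hWM : W ≤ M := le_sup_right
  have hWconjM : ∀ m ∈ M, ∀ w ∈ W, m * w * m⁻¹ ∈ W := by
    intro m hm w hw
    obtain ⟨u, hu, w', hw', rfl⟩ := mem_sup_decomp hPnW m hm
    have h1 : w' * w * w'⁻¹ ∈ W := mul_mem (mul_mem hw' hw) (inv_mem hw')
    have h2 := hPnW u hu _ h1
    have he : u * w' * w * (u * w')⁻¹ = u * (w' * w * w'⁻¹) * u⁻¹ := by group
    rwa [← he] at h2
  have hPsub : IsPGroup p (P.subgroupOf M) :=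
    hP.of_equiv (Subgroup.subgroupOfEquivOfLe hPM).symm
  obtain ⟨S, hPS⟩ := hPsub.exists_le_sylow
  set T := Subgroup.map M.subtype ((S : Subgroup M) ⊓ W.subgroupOf M) with hT
  have hTW : T ≤ W := by
    rintro t ⟨t', ht', rfl⟩
    exact Subgroup.mem_subgroupOf.mp ht'.2
  have hTp : IsPGroup p T := (S.isPGroup'.to_le inf_le_left).map M.subtype
  have hTnorm : ∀ u ∈ P, ∀ t ∈ T, u * t * u⁻¹ ∈ T := by
    intro u hu t ht
    obtain ⟨t', ht', rfl⟩ := ht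
    have huS : (⟨u, hPM hu⟩ : M) ∈ (S : Subgroup M) :=
      hPS (Subgroup.mem_subgroupOf.mpr hu)
    have hmem : (⟨u, hPM hu⟩ : M) * t' * (⟨u, hPM hu⟩ : M)⁻¹ ∈
        (S : Subgroup M) ⊓ W.subgroupOf M := by
      refine Subgroup.mem_inf.mpr ⟨mul_mem (mul_mem huS ht'.1) (inv_mem huS), ?_⟩
      refine Subgroup.mem_subgroupOf.mpr ?_
      have := hPnW u hu _ (Subgroup.mem_subgroupOf.mp ht'.2)
      simpa using this
    have hco : (((⟨u, hPM hu⟩ : M) * t' * (⟨u, hPM hu⟩ : M)⁻¹ : M) : G)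
        = u * (t' : G) * u⁻¹ := by simp
    exact hco ▸ Subgroup.mem_map_of_mem M.subtype hmem
  have hTP : T ≤ P := by
    by_contra hTP
    obtain ⟨t, htT, htP, htN⟩ := lemE hp hP hTp hTnorm hTP
    have htpe : ∃ a : ℕ, t ^ p ^ a = 1 := by
      obtain ⟨a, ha⟩ := hTp ⟨t, htT⟩
      exact ⟨a, by simpa [Subtype.ext_iff, SubmonoidClass.coe_pow] using ha⟩
    exact htP (hkey t (hTW htT) htN htpe)
  -- now conjugate a given p-element of W into T
  intro g hg hgp
  have hgM : g ∈ M := hWM hg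
  set gM : M := ⟨g, hgM⟩ with hgM'
  have hZp : IsPGroup p (Subgroup.zpowers gM) := by
    rintro ⟨z, hz⟩
    obtain ⟨k, rfl⟩ := Subgroup.mem_zpowers_iff.mp hz
    obtain ⟨a, ha⟩ := hgp
    have hga : gM ^ (p ^ a) = 1 := by
      apply Subtype.ext
      simpa [SubmonoidClass.coe_pow] using ha
    refine ⟨a, ?_⟩
    apply Subtype.ext
    have hcomm : (gM ^ k) ^ (p ^ a : ℕ) = (gM ^ (p ^ a : ℕ)) ^ k := by
      rw [← zpow_natCast (gM ^ k) (p ^ a), ← zpow_mul, mul_comm, zpow_mul, zpow_natCast]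
    simp only [SubmonoidClass.coe_pow, OneMemClass.coe_one]
    calc ((⟨gM ^ k, hz⟩ : Subgroup.zpowers gM) : M) ^ p ^ a
        = (gM ^ k) ^ (p ^ a : ℕ) := rfl
      _ = (gM ^ (p ^ a : ℕ)) ^ k := hcomm
      _ = 1 := by rw [hga, one_zpow]
  obtain ⟨S', hS'⟩ := hZp.exists_le_sylow
  obtain ⟨m, hm⟩ := MulAction.exists_smul_eq M S' S
  have hSeq : (S : Subgroup M) = MulAut.conj m • (S' : Subgroup M) := by
    rw [← hm, Sylow.coe_subgroup_smul]
  have hgS : m * gM * m⁻¹ ∈ (S : Subgroup M) := by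
    rw [hSeq, Subgroup.mem_smul_pointwise_iff_exists]
    exact ⟨gM, hS' (Subgroup.mem_zpowers gM), rfl⟩
  have hyW : ((m * gM * m⁻¹ : M) : G) ∈ W := by
    have := hWconjM (m : G) m.2 g hg
    simpa using this
  set y : G := ((m * gM * m⁻¹ : M) : G) with hy
  have hyT : y ∈ T :=
    Subgroup.mem_map_of_mem _ (Subgroup.mem_inf.mpr ⟨hgS, Subgroup.mem_subgroupOf.mpr hyW⟩)
  have hyQ : y ∈ P ⊓ H := Subgroup.mem_inf.mpr ⟨hTP hyT, hWH hyW⟩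
  obtain ⟨u, hu, w, hw, hdec⟩ := mem_sup_decomp hPnW ((m⁻¹ : M) : G) (m⁻¹ : M).2
  refine ⟨u, hu, w, hw, y, hyQ, ?_⟩
  have hge : g = ((m⁻¹ : M) : G) * y * ((m⁻¹ : M) : G)⁻¹ := by
    rw [hy]
    simp only [Subgroup.coe_mul, Subgroup.coe_inv]
    group
    rfl
  rw [hge, hdec]
  group

end Stmt16Aux5
namespace Stmt16Aux6

open Subgroup

/-- The join of all normal `p`-subgroups of a finite group is a normal `p`-subgroup. -/
theorem pCore_spec (p : ℕ) (X : Type*) [Group X] [Finite X] :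
    (sSup {J : Subgroup X | J.Normal ∧ IsPGroup p J}).Normal ∧
      IsPGroup p (sSup {J : Subgroup X | J.Normal ∧ IsPGroup p J} : Subgroup X) := by
  haveI : Finite (Subgroup X) :=
    Finite.of_injective (fun K => (K : Set X)) SetLike.coe_injective
  have main : ∀ s : Set (Subgroup X), s.Finite →
      ((∀ J ∈ s, J.Normal ∧ IsPGroup p J) → (sSup s).Normal ∧
        IsPGroup p (sSup s : Subgroup X)) := by
    intro s hs
    refine Set.Finite.induction_on s hs ?_ ?_
    · intro _
      rw [sSup_empty]
      exact ⟨inferInstance, IsPGroup.of_bot⟩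
    · intro a s' _ _ ih h
      have ha := h a (Set.mem_insert a s')
      have hs'' := ih fun J hJ => h J (Set.mem_insert_of_mem a hJ)
      rw [sSup_insert]
      haveI := ha.1
      haveI := hs''.1
      exact ⟨inferInstance, IsPGroup.to_sup_of_normal_right ha.2 hs''.2⟩
  exact main _ (Set.toFinite _) fun J hJ => hJ

variable {G : Type*} [Group G]

theorem centralizer_subgroupOf_eq {Q H : Subgroup G} (hQH : Q ≤ H) :
    Subgroup.centralizer ((Q.subgroupOf H : Subgroup H) : Set H)
      = (Subgroup.centralizer (Q : Set G) ⊓ H).subgroupOf H := by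
  ext g
  rw [Subgroup.mem_subgroupOf, Subgroup.mem_inf, Subgroup.mem_centralizer_iff,
    Subgroup.mem_centralizer_iff]
  constructor
  · intro hg
    refine ⟨fun q hq => ?_, g.2⟩
    have := hg ⟨q, hQH hq⟩ (Subgroup.mem_subgroupOf.mpr hq)
    simpa [Subtype.ext_iff] using this
  · intro hg h hh
    apply Subtype.ext
    simpa using hg.1 (h : G) (Subgroup.mem_subgroupOf.mp hh)

theorem normalizer_subgroupOf_eq {Q H : Subgroup G} (hQH : Q ≤ H) :
    (Subgroup.normalizer ((Q.subgroupOf H : Subgroup H) : Set H)) = (((Subgroup.normalizer (Q : Set G)) ⊓ H).subgroupOf H) := by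
  ext g
  rw [Subgroup.mem_subgroupOf, Subgroup.mem_inf, Subgroup.mem_normalizer_iff,
    Subgroup.mem_normalizer_iff]
  constructor
  · intro hg
    refine ⟨fun q => ⟨fun hq => ?_, fun hq => ?_⟩, g.2⟩
    · have := (hg ⟨q, hQH hq⟩).mp (Subgroup.mem_subgroupOf.mpr hq)
      have h2 := Subgroup.mem_subgroupOf.mp this
      simpa using h2
    · have hqH : q ∈ H := by
        have h1 : (g : G)⁻¹ * ((g : G) * q * (g : G)⁻¹) * (g : G) ∈ H :=
          mul_mem (mul_mem (inv_mem g.2) (hQH hq)) g.2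
        have he : (g : G)⁻¹ * ((g : G) * q * (g : G)⁻¹) * (g : G) = q := by group
        rwa [he] at h1
      have := (hg ⟨q, hqH⟩).mpr (Subgroup.mem_subgroupOf.mpr (by simpa using hq))
      exact Subgroup.mem_subgroupOf.mp this
  · intro hg q
    rw [Subgroup.mem_subgroupOf, Subgroup.mem_subgroupOf]
    have := hg.1 (q : G)
    simpa using this

theorem subgroupOf_sup_eq {A B H : Subgroup G} (hA : A ≤ H) (hB : B ≤ H) :
    A.subgroupOf H ⊔ B.subgroupOf H = (A ⊔ B).subgroupOf H := by
  apply Subgroup.map_injective (Subgroup.subtype_injective H)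
  rw [Subgroup.map_sup, Subgroup.subgroupOf_map_subtype, Subgroup.subgroupOf_map_subtype,
    Subgroup.subgroupOf_map_subtype, inf_eq_left.mpr hA, inf_eq_left.mpr hB,
    inf_eq_left.mpr (sup_le hA hB)]

end Stmt16Aux6
open Subgroup Stmt16Aux Stmt16Aux2 Stmt16Aux3 Stmt16Aux4 Stmt16Aux5 Stmt16Aux6 in
theorem stmt_16 (p : ℕ) (hp : p.Prime) {G : Type*} [Group G] [Finite G]
    (H : Subgroup G) (hH : H.Normal) (hidx : ∃ k : ℕ, H.index = p ^ k)
    (P : Subgroup G) (hP : IsPGroup p P) (hc : IsPCentric p P) (hr : IsFpRadical p P) :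
    IsPCentric p ((P ⊓ H).subgroupOf H) ∧ IsFpRadical p ((P ⊓ H).subgroupOf H) := by
  classical
  haveI : Fact p.Prime := ⟨hp⟩
  have hQH : P ⊓ H ≤ H := inf_le_right
  have hCH : Subgroup.centralizer (((P ⊓ H) : Subgroup G) : Set G) ⊓ H ≤ H := inf_le_right
  -- the G-level centric statement
  have hWH1 : (P ⊓ H) ⊔ (Subgroup.centralizer (((P ⊓ H) : Subgroup G) : Set G) ⊓ H) ≤ H :=
    sup_le hQH hCH
  have hWpow1 : ∀ w ∈ (P ⊓ H) ⊔ (Subgroup.centralizer (((P ⊓ H) : Subgroup G) : Set G) ⊓ H),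
      ∃ m : ℕ, w ^ p ^ m ∈
        (P ⊓ H) ⊔ (Subgroup.centralizer (((P ⊓ H) : Subgroup G) : Set G) ⊓ H) :=
    fun w hw => ⟨0, by simpa using hw⟩
  have centricG : ∀ g ∈ Subgroup.centralizer (((P ⊓ H) : Subgroup G) : Set G) ⊓ H,
      (∃ n : ℕ, g ^ p ^ n = 1) → g ∈ P ⊓ H := by
    intro g hgC hgp
    obtain ⟨u, hu, w, hw, y, hyQ, hdec⟩ :=
      engine hp hH hP hc hr _ hWH1 (hQCconj hH) hWpow1 g (Subgroup.mem_sup_right hgC) hgp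
    obtain ⟨q, hq, c, hcC, rfl⟩ := hQCdecomp hH w hw
    have hcy : c * y * c⁻¹ = y := by
      have h1 := Subgroup.mem_centralizer_iff.mp (Subgroup.mem_inf.mp hcC).1 y hyQ
      rw [← h1]
      simp [mul_assoc]
    have hv : (q * c) * y * (q * c)⁻¹ ∈ P ⊓ H := by
      have he : (q * c) * y * (q * c)⁻¹ = q * (c * y * c⁻¹) * q⁻¹ := by group
      rw [he, hcy]
      exact hQconj hH q (Subgroup.le_normalizer (Subgroup.mem_inf.mp hq).1) y hyQ
    rw [hdec]
    exact hQconj hH u (Subgroup.le_normalizer hu) _ hv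
  constructor
  · -- p-centric part
    intro g hgcent hgp
    have hgC : (g : G) ∈ Subgroup.centralizer (((P ⊓ H) : Subgroup G) : Set G) ⊓ H := by
      have h1 : g ∈ (Subgroup.centralizer (((P ⊓ H) : Subgroup G) : Set G) ⊓ H).subgroupOf H := by
        rw [← centralizer_subgroupOf_eq hQH]
        exact hgcent
      exact Subgroup.mem_subgroupOf.mp h1
    have hgp' : ∃ n : ℕ, (g : G) ^ p ^ n = 1 := by
      obtain ⟨n, hn⟩ := hgp
      exact ⟨n, by simpa [SubmonoidClass.coe_pow] using congrArg Subtype.val hn⟩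
    exact Subgroup.mem_subgroupOf.mpr (centricG (g : G) hgC hgp')
  · -- F_p-radical part
    set Q' : Subgroup H := (P ⊓ H).subgroupOf H with hQ'def
    intro K hKn hKp
    set NH : Subgroup G := (Subgroup.normalizer (((P ⊓ H : Subgroup G)) : Set G)) ⊓ H with hNHdef
    haveI : ((Q' ⊔ Subgroup.centralizer (Q' : Set H)).subgroupOf (Subgroup.normalizer (Q' : Set H))).Normal :=
      outKer_normal Q'
    have hNH_eq : (Subgroup.normalizer (Q' : Set H)) = NH.subgroupOf H := normalizer_subgroupOf_eq hQH
    let ι : NH →* (Subgroup.normalizer (Q' : Set H)) :=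
      { toFun := fun g => ⟨⟨(g : G), g.2.2⟩, by
          rw [hNH_eq]
          exact Subgroup.mem_subgroupOf.mpr g.2⟩
        map_one' := rfl
        map_mul' := fun a b => rfl }
    let Θ : NH →* OutG Q' := (QuotientGroup.mk' (outKer Q')).comp ι
    have houtker : ∀ y : (Subgroup.normalizer (Q' : Set H)),
        y ∈ outKer Q' ↔ ((y : H) : G) ∈ (P ⊓ H) ⊔
          (Subgroup.centralizer (((P ⊓ H) : Subgroup G) : Set G) ⊓ H) := by
      intro y
      rw [outKer, Subgroup.mem_subgroupOf]
      have hQ'c : Q' ⊔ Subgroup.centralizer (Q' : Set H)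
          = (((P ⊓ H) : Subgroup G) ⊔
            (Subgroup.centralizer (((P ⊓ H) : Subgroup G) : Set G) ⊓ H)).subgroupOf H := by
        rw [hQ'def, centralizer_subgroupOf_eq hQH]
        exact subgroupOf_sup_eq hQH hCH
      rw [hQ'c, Subgroup.mem_subgroupOf]
    have hker : ∀ x : NH, Θ x = 1 ↔ (x : G) ∈ (P ⊓ H) ⊔
        (Subgroup.centralizer (((P ⊓ H) : Subgroup G) : Set G) ⊓ H) := by
      intro x
      exact (QuotientGroup.eq_one_iff (ι x)).trans (houtker (ι x))
    haveI : Finite (OutG Q') := inferInstanceAs (Finite ((Subgroup.normalizer (Q' : Set H)) ⧸ outKer Q'))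
    obtain ⟨hOpN, hOpP⟩ := pCore_spec p (OutG Q')
    set Op : Subgroup (OutG Q') := sSup {J : Subgroup (OutG Q') | J.Normal ∧ IsPGroup p J}
      with hOpdef
    set W : Subgroup G := Subgroup.map NH.subtype (Op.comap Θ) with hWdef
    have hWNH : W ≤ NH := by
      rintro w ⟨x, _, rfl⟩
      exact x.2
    have hWH2 : W ≤ H := fun w hw => ((hWNH hw).2 : w ∈ H)
    have hWmem : ∀ x : NH, ((x : G) ∈ W ↔ Θ x ∈ Op) := by
      intro x
      constructor
      · rintro ⟨x', hx', hco⟩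
        have hxx : x' = x := Subtype.ext hco
        rw [← hxx]
        exact Subgroup.mem_comap.mp hx'
      · intro hx
        exact Subgroup.mem_map_of_mem _ (Subgroup.mem_comap.mpr hx)
    have hWpow2 : ∀ w ∈ W, ∃ m : ℕ, w ^ p ^ m ∈ (P ⊓ H) ⊔
        (Subgroup.centralizer (((P ⊓ H) : Subgroup G) : Set G) ⊓ H) := by
      intro w hw
      obtain ⟨x, hx, rfl⟩ := hw
      have hΘx : Θ x ∈ Op := Subgroup.mem_comap.mp hx
      obtain ⟨m, hm⟩ := hOpP ⟨Θ x, hΘx⟩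
      have h1 : (Θ x) ^ p ^ m = 1 := by
        simpa [Subtype.ext_iff, SubmonoidClass.coe_pow] using hm
      have h2 : Θ (x ^ p ^ m) = 1 := by rw [map_pow]; exact h1
      refine ⟨m, ?_⟩
      have h3 := (hker _).mp h2
      simpa [SubmonoidClass.coe_pow] using h3
    -- conjugation action of the normalizer of P
    have hNHconj : ∀ n ∈ (Subgroup.normalizer (P : Set G)), ∀ x ∈ NH, n * x * n⁻¹ ∈ NH := by
      intro n hn x hx
      exact Subgroup.mem_inf.mpr
        ⟨mul_mem (mul_mem (norm_le_inf_normalizer hH hn) (Subgroup.mem_inf.mp hx).1)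
          (inv_mem (norm_le_inf_normalizer hH hn)), hH.conj_mem _ (Subgroup.mem_inf.mp hx).2 n⟩
    have hxNH : ∀ x : (Subgroup.normalizer (Q' : Set H)), ((x : H) : G) ∈ NH := by
      intro x
      exact Subgroup.mem_subgroupOf.mp ((le_of_eq hNH_eq) x.2)
    let F : ∀ n : G, n ∈ (Subgroup.normalizer (P : Set G)) → ((Subgroup.normalizer (Q' : Set H)) →* (Subgroup.normalizer (Q' : Set H))) := fun n hn =>
      { toFun := fun x => ι ⟨n * ((x : H) : G) * n⁻¹, hNHconj n hn _ (hxNH x)⟩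
        map_one' := by
          refine Subtype.ext (Subtype.ext ?_)
          show n * (((1 : (Subgroup.normalizer (Q' : Set H))) : H) : G) * n⁻¹ = (((1 : (Subgroup.normalizer (Q' : Set H))) : H) : G)
          simp
        map_mul' := fun a b => by
          refine Subtype.ext (Subtype.ext ?_)
          show n * (((a * b : (Subgroup.normalizer (Q' : Set H))) : H) : G) * n⁻¹ =
            (n * ((a : H) : G) * n⁻¹) * (n * ((b : H) : G) * n⁻¹)
          have hco : (((a * b : (Subgroup.normalizer (Q' : Set H))) : H) : G) = ((a : H) : G) * ((b : H) : G) := rfl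
          rw [hco]
          group }
    have hFcoe : ∀ n hn (x : (Subgroup.normalizer (Q' : Set H))),
        (((F n hn x : (Subgroup.normalizer (Q' : Set H))) : H) : G) = n * ((x : H) : G) * n⁻¹ := fun _ _ _ => rfl
    have hFker : ∀ n (hn : n ∈ (Subgroup.normalizer (P : Set G))), outKer Q' ≤ (outKer Q').comap (F n hn) := by
      intro n hn y hy
      refine Subgroup.mem_comap.mpr ((houtker _).mpr ?_)
      rw [hFcoe n hn]
      exact hQCconj hH n hn _ ((houtker y).mp hy)
    let φ : ∀ n : G, n ∈ (Subgroup.normalizer (P : Set G)) → (OutG Q' →* OutG Q') := fun n hn =>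
      QuotientGroup.map (outKer Q') (outKer Q') (F n hn) (hFker n hn)
    have hφ_mk : ∀ n hn (y : (Subgroup.normalizer (Q' : Set H))),
        φ n hn (QuotientGroup.mk' (outKer Q') y) = QuotientGroup.mk' (outKer Q') (F n hn y) :=
      fun n hn y => QuotientGroup.map_mk' _ _ _ _ y
    have hφ_surj : ∀ n hn, Function.Surjective (φ n hn) := by
      intro n hn z
      obtain ⟨y, rfl⟩ := QuotientGroup.mk'_surjective (outKer Q') z
      refine ⟨QuotientGroup.mk' (outKer Q') (F n⁻¹ (inv_mem hn) y), ?_⟩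
      rw [hφ_mk n hn]
      congr 1
      refine Subtype.ext (Subtype.ext ?_)
      rw [hFcoe n hn, hFcoe n⁻¹ (inv_mem hn)]
      group
    have hWinv2 : ∀ n ∈ (Subgroup.normalizer (P : Set G)), ∀ w ∈ W, n * w * n⁻¹ ∈ W := by
      intro n hn w hw
      obtain ⟨x, hx, rfl⟩ := hw
      have hΘx : Θ x ∈ Op := Subgroup.mem_comap.mp hx
      have hx'NH : n * (x : G) * n⁻¹ ∈ NH := hNHconj n hn _ x.2
      have hΘx' : Θ (⟨n * (x : G) * n⁻¹, hx'NH⟩ : NH) = (φ n hn) (Θ x) := by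
        have hFx : ι ⟨n * (x : G) * n⁻¹, hx'NH⟩ = F n hn (ι x) := by
          apply Subtype.ext
          apply Subtype.ext
          rfl
        show QuotientGroup.mk' (outKer Q') (ι ⟨n * (x : G) * n⁻¹, hx'NH⟩) =
          φ n hn (QuotientGroup.mk' (outKer Q') (ι x))
        rw [hφ_mk n hn, hFx]
      have hmapOp : Subgroup.map (φ n hn) Op ≤ Op :=
        le_sSup ⟨hOpN.map _ (hφ_surj n hn), hOpP.map _⟩
      have hmem : Θ (⟨n * (x : G) * n⁻¹, hx'NH⟩ : NH) ∈ Op := by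
        rw [hΘx']
        exact hmapOp (Subgroup.mem_map_of_mem _ hΘx)
      exact (hWmem _).mpr hmem
    -- conclusion
    have hK_le : K ≤ Op := le_sSup ⟨hKn, hKp⟩
    rw [eq_bot_iff]
    intro k hk
    have hkOp : k ∈ Op := hK_le hk
    rw [Subgroup.mem_bot]
    obtain ⟨y, rfl⟩ := QuotientGroup.mk'_surjective (outKer Q') k
    set x : NH := ⟨((y : H) : G), hxNH y⟩ with hxdef
    have hΘx : Θ x = QuotientGroup.mk' (outKer Q') y := by
      show QuotientGroup.mk' (outKer Q') (ι x) = QuotientGroup.mk' (outKer Q') y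
      exact congrArg _ (Subtype.ext (Subtype.ext rfl))
    obtain ⟨b, hb⟩ := hOpP ⟨QuotientGroup.mk' (outKer Q') y, hkOp⟩
    have hkb : (QuotientGroup.mk' (outKer Q') y) ^ p ^ b = 1 := by
      exact congrArg Subtype.val hb
    have hn0 : orderOf x ≠ 0 := (orderOf_pos x).ne'
    have hfac : p ^ (orderOf x).factorization p *
        ((orderOf x) / p ^ (orderOf x).factorization p) = orderOf x :=
      Nat.ordProj_mul_ordCompl_eq_self (orderOf x) p
    have hcop : Nat.Coprime p ((orderOf x) / p ^ (orderOf x).factorization p) :=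
      Nat.coprime_ordCompl hp hn0
    have hcop2 : Nat.Coprime ((orderOf x) / p ^ (orderOf x).factorization p)
        (orderOf (QuotientGroup.mk' (outKer Q') y)) := by
      have h1 : orderOf (QuotientGroup.mk' (outKer Q') y) ∣ p ^ b :=
        orderOf_dvd_of_pow_eq_one hkb
      exact Nat.Coprime.coprime_dvd_right h1 (Nat.Coprime.pow_right b hcop.symm)
    obtain ⟨j, hj⟩ := exists_pow_eq_self_of_coprime hcop2
    set m := (orderOf x) / p ^ (orderOf x).factorization p with hmdef
    set a := (orderOf x).factorization p with hadef
    have hxp : (x ^ (m * j)) ^ p ^ a = 1 := by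
      rw [← pow_mul]
      have he : m * j * p ^ a = orderOf x * j := by rw [← hfac]; ring
      rw [he, pow_mul, pow_orderOf_eq_one, one_pow]
    have hΘpow : Θ (x ^ (m * j)) = QuotientGroup.mk' (outKer Q') y := by
      rw [map_pow, hΘx]
      exact (pow_mul _ m j).trans hj
    have hgW : ((x ^ (m * j) : NH) : G) ∈ W := by
      refine (hWmem _).mpr ?_
      rw [hΘpow]
      exact hkOp
    have hgpe : ∃ n : ℕ, ((x ^ (m * j) : NH) : G) ^ p ^ n = 1 :=
      ⟨a, by simpa [SubmonoidClass.coe_pow] using congrArg Subtype.val hxp⟩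
    obtain ⟨u, hu, w, hw, yq, hyQ, hdec⟩ :=
      engine hp hH hP hc hr W hWH2 hWinv2 hWpow2 _ hgW hgpe
    have hyNH : yq ∈ NH :=
      Subgroup.mem_inf.mpr ⟨Subgroup.le_normalizer hyQ, (Subgroup.mem_inf.mp hyQ).2⟩
    have hwNH : w ∈ NH := hWNH hw
    have hΘy : Θ (⟨yq, hyNH⟩ : NH) = 1 := (hker _).mpr (Subgroup.mem_sup_left hyQ)
    have hΘv : Θ ((⟨w, hwNH⟩ : NH) * ⟨yq, hyNH⟩ * (⟨w, hwNH⟩ : NH)⁻¹) = 1 := by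
      rw [map_mul, map_mul, map_inv, hΘy, mul_one, mul_inv_cancel]
    have hvQC : w * yq * w⁻¹ ∈ (P ⊓ H) ⊔
        (Subgroup.centralizer (((P ⊓ H) : Subgroup G) : Set G) ⊓ H) := by
      have h3 := (hker _).mp hΘv
      simpa using h3
    have hgQC : ((x ^ (m * j) : NH) : G) ∈ (P ⊓ H) ⊔
        (Subgroup.centralizer (((P ⊓ H) : Subgroup G) : Set G) ⊓ H) := by
      rw [hdec]
      exact hQCconj hH u (Subgroup.le_normalizer hu) _ hvQC
    have hfinal : Θ (x ^ (m * j)) = 1 := (hker _).mpr hgQC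
    rw [← hΘpow]
    exact hfinal
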